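/- Let f : [a,b] → ℝ≥0 be a continuous concave function with maximum value M = max{f(t) : t ∈ [a,b]}. If M ≥ b - a, then the monotone reordering satisfies f^#(t) ≥ t for all t ∈ (0, b-a]. -/

import Mathlib

open MeasureTheory Set

/-- The monotone reordering of `f : [a,b] → ℝ`. -/
noncomputable def monRe (f : ℝ → ℝ) (a b : ℝ) (t : ℝ) : ℝ :=
  sInf { s : ℝ | t ≤ (volume { x ∈ Icc a b | f x ≤ s }).toReal }

lemma concave_coeff_le {f : ℝ → ℝ} {D : Set ℝ} (hconc : ConcaveOn ℝ D f)
    {u v : ℝ} (hu : u ∈ D) (hv : v ∈ D) (hfu : 0 ≤ f u)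
    {M s : ℝ} (hMpos : 0 < M) (hfv : f v = M)
    (μ₁ μ₂ : ℝ) (h1 : 0 ≤ μ₁) (h2 : 0 ≤ μ₂) (hsum : μ₁ + μ₂ = 1)
    (hfx : f (μ₁ * u + μ₂ * v) ≤ s) : μ₂ ≤ s / M := by
  have h := hconc.2 hu hv h1 h2 hsum
  simp only [smul_eq_mul] at h
  rw [hfv] at h
  rw [le_div_iff₀ hMpos]
  nlinarith

theorem monRe_ge_id_of_concave (f : ℝ → ℝ) (a b : ℝ) (hab : a ≤ b)
    (hf : ContinuousOn f (Icc a b)) (hconc : ConcaveOn ℝ (Icc a b) f)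
    (hpos : ∀ x ∈ Icc a b, 0 ≤ f x) (M : ℝ)
    (hM : IsGreatest (f '' Icc a b) M) (hMba : b - a ≤ M) :
    ∀ t ∈ Ioc 0 (b - a), t ≤ monRe f a b t := by
  intro t ht
  obtain ⟨ht0, htba⟩ := ht
  have hab' : a < b := by
    rcases lt_or_eq_of_le hab with h | h
    · exact h
    · exfalso; rw [h] at htba; linarith
  have hM0 : 0 < M := lt_of_lt_of_le (by linarith) hMba
  obtain ⟨x₀, hx₀mem, hfx₀⟩ := hM.1
  apply le_csInf
  · refine ⟨M, ?_⟩
    have hset : {x | x ∈ Icc a b ∧ f x ≤ M} = Icc a b := by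
      ext x
      simp only [mem_setOf_eq]
      exact ⟨fun h => h.1, fun h => ⟨h, hM.2 ⟨x, h, rfl⟩⟩⟩
    show t ≤ (volume {x | x ∈ Icc a b ∧ f x ≤ M}).toReal
    rw [hset, Real.volume_Icc, ENNReal.toReal_ofReal (by linarith)]
    linarith
  · intro s hs
    by_contra hst
    push_neg at hst
    have hs' : t ≤ (volume {x | x ∈ Icc a b ∧ f x ≤ s}).toReal := hs
    rcases lt_or_ge s 0 with hs0 | hs0
    · have hset : {x | x ∈ Icc a b ∧ f x ≤ s} = ∅ := by
        ext x
        simp only [mem_setOf_eq, mem_empty_iff_false, iff_false, not_and]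
        intro hx hfs
        linarith [hpos x hx]
      rw [hset] at hs'
      simp at hs'
      linarith
    · have hsM : 0 ≤ s / M := div_nonneg hs0 hM0.le
      have hca : 0 ≤ s / M * (x₀ - a) :=
        mul_nonneg hsM (by linarith [hx₀mem.1])
      have hbd : 0 ≤ s / M * (b - x₀) :=
        mul_nonneg hsM (by linarith [hx₀mem.2])
      have hsub : {x | x ∈ Icc a b ∧ f x ≤ s} ⊆
          Icc a (a + s / M * (x₀ - a)) ∪ Icc (b - s / M * (b - x₀)) b := by
        rintro x ⟨hx, hfs⟩
        rcases le_total x x₀ with hxx | hxx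
        · left
          refine ⟨hx.1, ?_⟩
          rcases eq_or_lt_of_le hx₀mem.1 with heq | hlt
          · have hxa : x ≤ a := heq ▸ hxx
            linarith
          · have hne : x₀ - a ≠ 0 := ne_of_gt (by linarith)
            have hxeq : (x₀ - x) / (x₀ - a) * a + (x - a) / (x₀ - a) * x₀ = x := by
              field_simp
              ring
            have hμ : (x - a) / (x₀ - a) ≤ s / M :=
              concave_coeff_le hconc (left_mem_Icc.2 hab) hx₀mem
                (hpos a (left_mem_Icc.2 hab)) hM0 hfx₀
                ((x₀ - x) / (x₀ - a)) ((x - a) / (x₀ - a))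
                (div_nonneg (by linarith) (by linarith))
                (div_nonneg (by linarith [hx.1]) (by linarith))
                (by rw [← add_div, div_eq_one_iff_eq hne]; ring)
                (by rw [hxeq]; exact hfs)
            have h2 := (div_le_iff₀ (by linarith : (0:ℝ) < x₀ - a)).1 hμ
            linarith
        · right
          refine ⟨?_, hx.2⟩
          rcases eq_or_lt_of_le hx₀mem.2 with heq | hlt
          · have hxb : b ≤ x := heq ▸ hxx
            linarith
          · have hne : b - x₀ ≠ 0 := ne_of_gt (by linarith)
            have hxeq : (x - x₀) / (b - x₀) * b + (b - x) / (b - x₀) * x₀ = x := by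
              field_simp
              ring
            have hμ : (b - x) / (b - x₀) ≤ s / M :=
              concave_coeff_le hconc (right_mem_Icc.2 hab) hx₀mem
                (hpos b (right_mem_Icc.2 hab)) hM0 hfx₀
                ((x - x₀) / (b - x₀)) ((b - x) / (b - x₀))
                (div_nonneg (by linarith) (by linarith))
                (div_nonneg (by linarith [hx.2]) (by linarith))
                (by rw [← add_div, div_eq_one_iff_eq hne]; ring)
                (by rw [hxeq]; exact hfs)
            have h2 := (div_le_iff₀ (by linarith : (0:ℝ) < b - x₀)).1 hμ
            linarith
      have hvol : volume {x | x ∈ Icc a b ∧ f x ≤ s} ≤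
          ENNReal.ofReal (s / M * (x₀ - a) + s / M * (b - x₀)) := by
        calc volume {x | x ∈ Icc a b ∧ f x ≤ s}
            ≤ volume (Icc a (a + s / M * (x₀ - a)) ∪ Icc (b - s / M * (b - x₀)) b) :=
              measure_mono hsub
          _ ≤ volume (Icc a (a + s / M * (x₀ - a))) + volume (Icc (b - s / M * (b - x₀)) b) :=
              measure_union_le _ _
          _ = ENNReal.ofReal (s / M * (x₀ - a)) + ENNReal.ofReal (s / M * (b - x₀)) := by
              rw [Real.volume_Icc, Real.volume_Icc]
              congr 2 <;> ring
          _ = ENNReal.ofReal (s / M * (x₀ - a) + s / M * (b - x₀)) :=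
              (ENNReal.ofReal_add hca hbd).symm
      have htoReal : (volume {x | x ∈ Icc a b ∧ f x ≤ s}).toReal ≤
          s / M * (x₀ - a) + s / M * (b - x₀) :=
        ENNReal.toReal_le_of_le_ofReal (by linarith) hvol
      have hle : s / M * (x₀ - a) + s / M * (b - x₀) ≤ s := by
        have h1 : s / M * (b - a) ≤ s / M * M := mul_le_mul_of_nonneg_left hMba hsM
        have h2 : s / M * M = s := div_mul_cancel₀ s hM0.ne'
        nlinarith
      linarith
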